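/- For the cycle graph C_n with n ≥ 6 and any adjacent vertices x, y, the h-LLY–Ricci curvature equals (h'(1) − h'(0))/h(1); in particular, it is nonpositive, and strictly negative whenever h is nonlinear. -/

import Mathlib

open Filter Set Classical

noncomputable section

/-- A hypergraph: a vertex type together with a family of hyperedges. -/
structure Hypergraph' (V : Type*) where
  E : Set (Set V)

namespace Hypergraph'

variable {V : Type*}

/-- Two distinct vertices are adjacent if some hyperedge contains both. -/
def Adj (H : Hypergraph' V) (x y : V) : Prop :=
  x ≠ y ∧ ∃ e ∈ H.E, x ∈ e ∧ y ∈ e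

/-- There is a path of length `n` from `x` to `y` (each consecutive pair lies
in a common hyperedge). -/
def IsPath (H : Hypergraph' V) (x y : V) (n : ℕ) : Prop :=
  ∃ f : ℕ → V, f 0 = x ∧ f n = y ∧ ∀ i < n, ∃ e ∈ H.E, f i ∈ e ∧ f (i + 1) ∈ e

/-- The graph distance on a hypergraph: the shortest length of a path. -/
def dist (H : Hypergraph' V) (x y : V) : ℕ :=
  sInf {n | H.IsPath x y n}

def Connected (H : Hypergraph' V) : Prop := ∀ x y : V, ∃ n, H.IsPath x y n

def LocallyFinite (H : Hypergraph' V) : Prop := ∀ x : V, {y | H.Adj x y}.Finite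

/-- A hypergraph is simple if no hyperedge is contained in a different one. -/
def Simple (H : Hypergraph' V) : Prop :=
  ∀ e₁ ∈ H.E, ∀ e₂ ∈ H.E, e₁ ≠ e₂ → ¬e₁ ⊆ e₂

/-- The degree of a vertex: the number of its neighbours. -/
def degree (H : Hypergraph' V) (x : V) : ℕ := {y | H.Adj x y}.ncard

end Hypergraph'

/-- A finitely supported probability function on `V`. -/
def IsProb {V : Type*} (μ : V → ℝ) : Prop :=
  (∀ v, 0 ≤ μ v) ∧ (Function.support μ).Finite ∧ ∑' v, μ v = 1

/-- A coupling of two probability functions. -/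
def IsCoupling {V : Type*} (π : V → V → ℝ) (μ ν : V → ℝ) : Prop :=
  (∀ x y, 0 ≤ π x y) ∧ (∀ x, ∑' y, π x y = μ x) ∧ (∀ y, ∑' x, π x y = ν y)

/-- The L¹-Wasserstein distance with respect to the graph distance of `H`. -/
def W1 {V : Type*} (H : Hypergraph' V) (μ ν : V → ℝ) : ℝ :=
  sInf {c | ∃ π, IsCoupling π μ ν ∧
    c = ∑' p : V × V, (H.dist p.1 p.2 : ℝ) * π p.1 p.2}

/-- A sequence of probability measures from `μ` to `ν` each of whose increments
is supported in a single hyperedge. -/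
def WhAdmissible {V : Type*} (H : Hypergraph' V) (μ ν : V → ℝ) (I : ℕ)
    (ξ : ℕ → V → ℝ) : Prop :=
  ξ 0 = μ ∧ ξ I = ν ∧ (∀ i ≤ I, IsProb (ξ i)) ∧
    ∀ i < I, ∃ e ∈ H.E, Function.support (fun v => ξ (i + 1) v - ξ i v) ⊆ e

/-- The new transport distance `W_h`. -/
def Wh {V : Type*} (H : Hypergraph' V) (h : ℝ → ℝ) (μ ν : V → ℝ) : ℝ :=
  sInf {c | ∃ I ξ, WhAdmissible H μ ν I ξ ∧
    c = ∑ i ∈ Finset.range I, h (W1 H (ξ i) (ξ (i + 1)))}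

/-- Assumptions on the concave cost function `h`, with one-sided derivatives
`D0 = h'(0)` and `D1 = h'(1)`. -/
structure CostFn (h : ℝ → ℝ) (D0 D1 : ℝ) : Prop where
  nonneg : ∀ x ∈ Set.Icc (0 : ℝ) 1, 0 ≤ h x
  mono : MonotoneOn h (Set.Icc (0 : ℝ) 1)
  cont : ContinuousOn h (Set.Icc (0 : ℝ) 1)
  concave : ConcaveOn ℝ (Set.Icc (0 : ℝ) 1) h
  zero : h 0 = 0
  d0_pos : 0 < D0
  d0 : Filter.Tendsto (fun t => h t / t) (nhdsWithin 0 (Set.Ioi 0)) (nhds D0)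
  d1 : Filter.Tendsto (fun t => (h 1 - h t) / (1 - t))
    (nhdsWithin 1 (Set.Iio 1)) (nhds D1)

/-- The Dirac measure at a point, as a probability function. -/
def dirac {V : Type*} (x : V) : V → ℝ := fun v => if v = x then 1 else 0

/-- The `α`-lazy uniform random walk at `x`. -/
def rw {V : Type*} (H : Hypergraph' V) (α : ℝ) (x : V) : V → ℝ :=
  fun v => if v = x then α else if H.Adj x v then (1 - α) / (H.degree x) else 0

/-- The `(α,h)`-Ollivier–Ricci curvature. -/
def ORic {V : Type*} (H : Hypergraph' V) (h : ℝ → ℝ) (α : ℝ) (x y : V) : ℝ :=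
  1 - Wh H h (rw H α x) (rw H α y) / Wh H h (dirac x) (dirac y)

/-- The `h`-LLY–Ricci curvature. -/
def hLLY {V : Type*} (H : Hypergraph' V) (h : ℝ → ℝ) (x y : V) : ℝ :=
  Filter.liminf (fun α => ORic H h α x y / (1 - α)) (nhdsWithin 1 (Set.Iio 1))

end

/-- The cycle graph on `n` vertices, as a hypergraph on `ZMod n` whose
hyperedges are the pairs of consecutive vertices. -/
def cycleH (n : ℕ) : Hypergraph' (ZMod n) :=
  ⟨{e | ∃ a : ZMod n, e = {a, a + 1}}⟩


section CurvAux

open Filter Set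

variable {h : ℝ → ℝ} {D0 D1 : ℝ}

lemma CostFn.mem01 {a : ℝ} (c : ℝ) (ha : a ∈ Set.Icc (0:ℝ) 1) :
    min |c| 1 ∈ Set.Icc (0:ℝ) 1 := ⟨le_min (abs_nonneg c) one_pos.le, min_le_right _ _⟩

lemma CostFn.concave_pt (hc : CostFn h D0 D1) {p a : ℝ} (hp : p ∈ Set.Icc (0:ℝ) 1)
    (ha0 : 0 ≤ a) (ha1 : a ≤ 1) : a * h p ≤ h (a * p) := by
  have := hc.concave.2 hp (⟨le_refl _, zero_le_one⟩ : (0:ℝ) ∈ Set.Icc (0:ℝ) 1)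
    ha0 (by linarith : 0 ≤ 1 - a) (by ring)
  simp only [smul_eq_mul, hc.zero, mul_zero, add_zero] at this
  exact this

lemma CostFn.subadd (hc : CostFn h D0 D1) {s t : ℝ} (hs : 0 ≤ s) (ht : 0 ≤ t)
    (hst : s + t ≤ 1) : h (s + t) ≤ h s + h t := by
  rcases eq_or_lt_of_le (by linarith : (0:ℝ) ≤ s + t) with h0 | hpos
  · have hs0 : s = 0 := by linarith
    have ht0 : t = 0 := by linarith
    simp [hs0, ht0, hc.zero]
  · have hmem : s + t ∈ Set.Icc (0:ℝ) 1 := ⟨hpos.le, hst⟩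
    have hcs : (s / (s+t)) * h (s+t) ≤ h s := by
      have := hc.concave_pt hmem (div_nonneg hs hpos.le)
        (by rw [div_le_one hpos]; linarith)
      rwa [div_mul_cancel₀ _ (ne_of_gt hpos)] at this
    have hct : (t / (s+t)) * h (s+t) ≤ h t := by
      have := hc.concave_pt hmem (div_nonneg ht hpos.le)
        (by rw [div_le_one hpos]; linarith)
      rwa [div_mul_cancel₀ _ (ne_of_gt hpos)] at this
    have : (s/(s+t)) * h (s+t) + (t/(s+t)) * h (s+t) = h (s+t) := by field_simp
    linarith

lemma CostFn.ge_lin (hc : CostFn h D0 D1) {t : ℝ} (ht : t ∈ Set.Icc (0:ℝ) 1) :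
    t * h 1 ≤ h t := by
  have := hc.concave_pt (⟨zero_le_one, le_refl _⟩ : (1:ℝ) ∈ Set.Icc (0:ℝ) 1) ht.1 ht.2
  simpa using this

lemma CostFn.slope_mono (hc : CostFn h D0 D1) {s t : ℝ} (hs : 0 ≤ s) (hst : s ≤ t)
    (ht0 : 0 < t) (ht : t ≤ 1) : (s / t) * h t ≤ h s := by
  have := hc.concave_pt (⟨ht0.le, ht⟩ : t ∈ Set.Icc (0:ℝ) 1)
    (div_nonneg hs ht0.le) (by rw [div_le_one ht0]; exact hst)
  rwa [div_mul_cancel₀ _ (ne_of_gt ht0)] at this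

lemma CostFn.le_D0 (hc : CostFn h D0 D1) {t : ℝ} (ht0 : 0 < t) (ht : t ≤ 1) :
    h t ≤ D0 * t := by
  have hev : ∀ᶠ s in nhdsWithin 0 (Set.Ioi (0:ℝ)), h t / t * s ≤ h s := by
    filter_upwards [Ioo_mem_nhdsGT_of_mem (by exact ⟨le_refl _, ht0⟩ : (0:ℝ) ∈ Set.Ico 0 t)]
      with s hs
    have := hc.slope_mono hs.1.le (le_of_lt hs.2) ht0 ht
    calc h t / t * s = s / t * h t := by ring
    _ ≤ h s := this
  have hev2 : ∀ᶠ s in nhdsWithin 0 (Set.Ioi (0:ℝ)), h t / t ≤ h s / s := by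
    filter_upwards [hev, self_mem_nhdsWithin] with s h1 h2
    rw [le_div_iff₀ (by exact h2)]
    linarith [h1]
  have := ge_of_tendsto hc.d0 hev2
  calc h t = h t / t * t := by field_simp
  _ ≤ D0 * t := by
      apply mul_le_mul_of_nonneg_right _ ht0.le
      exact this

lemma CostFn.D1_le_h1 (hc : CostFn h D0 D1) : D1 ≤ h 1 := by
  have hev : ∀ᶠ t in nhdsWithin 1 (Set.Iio (1:ℝ)), (h 1 - h t) / (1 - t) ≤ h 1 := by
    filter_upwards [Ioo_mem_nhdsLT_of_mem (by constructor <;> norm_num : (1:ℝ) ∈ Set.Ioc 0 1)]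
      with t htm
    have hlin := hc.ge_lin ⟨htm.1.le, htm.2.le⟩
    rw [div_le_iff₀ (by linarith [htm.2])]
    nlinarith
  exact le_of_tendsto hc.d1 hev

lemma CostFn.h1_le_D0 (hc : CostFn h D0 D1) : h 1 ≤ D0 := by
  simpa using hc.le_D0 one_pos (le_refl 1)

lemma CostFn.h1_pos (hc : CostFn h D0 D1) : 0 < h 1 := by
  have h1 : ∀ᶠ s in nhdsWithin 0 (Set.Ioi (0:ℝ)), D0/2 < h s / s := by
    have := hc.d0.eventually (eventually_gt_nhds (by linarith [hc.d0_pos] : D0/2 < D0))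
    exact this
  have h2 : ∀ᶠ s in nhdsWithin 0 (Set.Ioi (0:ℝ)), s ∈ Set.Ioo (0:ℝ) 1 :=
    Ioo_mem_nhdsGT_of_mem (by constructor <;> norm_num : (0:ℝ) ∈ Set.Ico 0 1)
  obtain ⟨s, hs1, hs2⟩ := (h1.and h2).exists
  have hspos : 0 < h s := by
    have : 0 < h s / s := lt_trans (by linarith [hc.d0_pos]) hs1
    have := mul_pos this hs2.1
    rwa [div_mul_cancel₀ _ (ne_of_gt hs2.1)] at this
  have : h s ≤ h 1 := hc.mono ⟨hs2.1.le, hs2.2.le⟩ ⟨zero_le_one, le_refl _⟩ hs2.2.le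
  linarith

lemma CostFn.sum_h_ge (hc : CostFn h D0 D1) {ι : Type*} (F : Finset ι) (t : ι → ℝ)
    (ht : ∀ i ∈ F, t i ∈ Set.Icc (0:ℝ) 1) {s : ℝ} (hs : s ∈ Set.Icc (0:ℝ) 1)
    (hsum : s ≤ ∑ i ∈ F, t i) : h s ≤ ∑ i ∈ F, h (t i) := by
  have hnn : ∀ i ∈ F, 0 ≤ h (t i) := fun i hi => hc.nonneg _ (ht i hi)
  by_cases hex : ∃ i ∈ F, s ≤ t i
  · obtain ⟨i, hiF, hi⟩ := hex
    calc h s ≤ h (t i) := hc.mono hs (ht i hiF) hi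
    _ ≤ ∑ j ∈ F, h (t j) := Finset.single_le_sum hnn hiF
  · push_neg at hex
    rcases eq_or_lt_of_le hs.1 with h0 | hspos
    · rw [← h0, hc.zero]; exact Finset.sum_nonneg hnn
    · have key : ∀ i ∈ F, (h s / s) * t i ≤ h (t i) := by
        intro i hiF
        have := hc.slope_mono (ht i hiF).1 (le_of_lt (hex i hiF)) hspos hs.2
        calc h s / s * t i = t i / s * h s := by ring
        _ ≤ h (t i) := this
      calc h s = (h s / s) * s := by field_simp
      _ ≤ (h s / s) * ∑ i ∈ F, t i := by
          apply mul_le_mul_of_nonneg_left hsum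
          exact div_nonneg (hc.nonneg _ hs) hspos.le
      _ = ∑ i ∈ F, (h s / s) * t i := Finset.mul_sum _ _ _
      _ ≤ ∑ i ∈ F, h (t i) := Finset.sum_le_sum key

lemma CostFn.pair_h (hc : CostFn h D0 D1) {a : ℝ} (ha : a ∈ Set.Icc (0:ℝ) 1) (c : ℝ) :
    h a ≤ h (min |a + c| 1) + h (min |c| 1) := by
  have hm1 : min |a + c| 1 ∈ Set.Icc (0:ℝ) 1 :=
    ⟨le_min (abs_nonneg _) one_pos.le, min_le_right _ _⟩
  have hm2 : min |c| 1 ∈ Set.Icc (0:ℝ) 1 :=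
    ⟨le_min (abs_nonneg _) one_pos.le, min_le_right _ _⟩
  rcases le_or_gt 0 c with hc0 | hc0
  · have : a ≤ min |a + c| 1 := by
      rw [abs_of_nonneg (by linarith [ha.1])]
      exact le_min (by linarith) ha.2
    have := hc.mono ha hm1 this
    linarith [hc.nonneg _ hm2]
  · rcases le_or_gt a (-c) with had | had
    · have : a ≤ min |c| 1 := by
        rw [abs_of_neg hc0]
        exact le_min had ha.2
      have := hc.mono ha hm2 this
      linarith [hc.nonneg _ hm1]
    · have h1 : |a + c| = a + c := abs_of_pos (by linarith)
      have h2 : |c| = -c := abs_of_neg hc0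
      have hmin1 : min |a + c| 1 = a + c := by rw [h1]; exact min_eq_left (by linarith [ha.2])
      have hmin2 : min |c| 1 = -c := by rw [h2]; exact min_eq_left (by linarith [ha.2])
      rw [hmin1, hmin2]
      have := hc.subadd (by linarith : (0:ℝ) ≤ a + c) (by linarith : (0:ℝ) ≤ -c)
        (by linarith [ha.2])
      simpa using this

end CurvAux


section PathAux

variable {V : Type*} {H : Hypergraph' V}

lemma Hypergraph'.isPath_refl (x : V) : H.IsPath x x 0 :=
  ⟨fun _ => x, rfl, rfl, fun i hi => absurd hi (by omega)⟩

lemma Hypergraph'.dist_self (x : V) : H.dist x x = 0 :=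
  Nat.sInf_eq_zero.mpr (Or.inl (Hypergraph'.isPath_refl x))

lemma Hypergraph'.isPath_symm {x y : V} {m : ℕ} (hp : H.IsPath x y m) : H.IsPath y x m := by
  obtain ⟨f, h0, hm, hstep⟩ := hp
  refine ⟨fun i => f (m - i), by simpa using hm, by simpa using h0, ?_⟩
  intro i hi
  obtain ⟨e, he, h1, h2⟩ := hstep (m - i - 1) (by omega)
  refine ⟨e, he, ?_, ?_⟩
  · have hh : m - i - 1 + 1 = m - i := by omega
    simpa [hh] using h2
  · have hh : m - (i+1) = m - i - 1 := by omega
    simpa [hh] using h1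

lemma Hypergraph'.dist_symm (x y : V) : H.dist x y = H.dist y x := by
  unfold Hypergraph'.dist
  congr 1
  ext m
  exact ⟨fun hp => Hypergraph'.isPath_symm hp, fun hp => Hypergraph'.isPath_symm hp⟩

lemma Hypergraph'.abs_le_of_path (f : V → ℝ)
    (hf : ∀ e ∈ H.E, ∀ u ∈ e, ∀ v ∈ e, |f u - f v| ≤ 1) :
    ∀ (m : ℕ) (x y : V), H.IsPath x y m → |f x - f y| ≤ m := by
  intro m
  induction m with
  | zero =>
    rintro x y ⟨p, h0, hm, -⟩
    rw [← h0, hm]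
    simp
  | succ k ih =>
    rintro x y ⟨p, h0, hm, hstep⟩
    have h1 : H.IsPath x (p k) k := ⟨p, h0, rfl, fun i hi => hstep i (by omega)⟩
    have hA := ih x (p k) h1
    obtain ⟨e, he, hu, hv⟩ := hstep k (by omega)
    have hB := hf e he _ hu _ hv
    rw [hm] at hv
    have hB' : |f (p k) - f y| ≤ 1 := by rw [← hm]; exact hB
    calc |f x - f y| ≤ |f x - f (p k)| + |f (p k) - f y| := abs_sub_le _ _ _
    _ ≤ (k : ℝ) + 1 := add_le_add hA hB'
    _ = ((k + 1 : ℕ) : ℝ) := by push_cast; ring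

lemma Hypergraph'.abs_le_dist (f : V → ℝ)
    (hf : ∀ e ∈ H.E, ∀ u ∈ e, ∀ v ∈ e, |f u - f v| ≤ 1)
    {x y : V} (hconn : ∃ m, H.IsPath x y m) : |f x - f y| ≤ H.dist x y := by
  have hne : {m | H.IsPath x y m}.Nonempty := hconn
  have hmem := Nat.sInf_mem hne
  exact H.abs_le_of_path f hf _ x y hmem

end PathAux

section CycleAux

variable {n : ℕ}

lemma cyc_ne (hn : 6 ≤ n) (x : ZMod n) {k : ℕ} (h1 : 1 ≤ k) (h5 : k ≤ 5) :
    x + (k : ZMod n) ≠ x := by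
  haveI : NeZero n := ⟨by omega⟩
  intro hEq
  have h0 : (k : ZMod n) = 0 := by
    have := congrArg (fun z => z - x) hEq
    simpa [add_comm, add_sub_cancel_right] using this
  rw [ZMod.natCast_eq_zero_iff] at h0
  have := Nat.le_of_dvd (by omega) h0
  omega

lemma cycle_edge_mem {a : ZMod n} : ({a, a + 1} : Set (ZMod n)) ∈ (cycleH n).E := ⟨a, rfl⟩

lemma cycle_adj_succ (hn : 6 ≤ n) (u : ZMod n) : (cycleH n).Adj u (u + 1) := by
  refine ⟨fun hEq => ?_, {u, u+1}, cycle_edge_mem, by simp, by simp⟩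
  exact cyc_ne hn u (k := 1) le_rfl (by norm_num) (by rw [Nat.cast_one]; exact hEq.symm)

lemma cycle_adj_iff (hn : 6 ≤ n) {u v : ZMod n} :
    (cycleH n).Adj u v ↔ (v = u + 1 ∨ v = u - 1) := by
  constructor
  · rintro ⟨hne, e, ⟨a, rfl⟩, hu, hv⟩
    rcases hu with hu | hu <;> rcases hv with hv | hv
    · exact absurd (hu.trans hv.symm) hne
    · subst hu; subst hv; left; rfl
    · subst hu; subst hv; right; ring
    · exact absurd (hu.trans hv.symm) hne
  · rintro (rfl | rfl)
    · exact cycle_adj_succ hn u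
    · have h := cycle_adj_succ hn (u - 1)
      have he : u - 1 + 1 = u := by ring
      rw [he] at h
      refine ⟨fun hEq => h.1 hEq.symm, ?_⟩
      obtain ⟨e, he2, h1, h2⟩ := h.2
      exact ⟨e, he2, h2, h1⟩

lemma cycle_degree (hn : 6 ≤ n) (x : ZMod n) : (cycleH n).degree x = 2 := by
  have hset : {y | (cycleH n).Adj x y} = {x + 1, x - 1} := by
    ext v; simp [cycle_adj_iff hn]
  rw [Hypergraph'.degree, hset]
  rw [Set.ncard_pair]
  intro hEq
  have h2 : (x - 1) + (2:ℕ) = x + 1 := by push_cast; ring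
  exact cyc_ne hn (x - 1) (k := 2) (by norm_num) (by norm_num) (by rw [h2, ← hEq])

lemma cycle_path (x : ZMod n) (k : ℕ) : (cycleH n).IsPath x (x + (k : ZMod n)) k := by
  refine ⟨fun i => x + (i : ZMod n), by simp, rfl, ?_⟩
  intro i hi
  refine ⟨{x + (i : ZMod n), x + (i : ZMod n) + 1}, cycle_edge_mem, by simp, ?_⟩
  show x + ((i + 1 : ℕ) : ZMod n) ∈ _
  have hcast : ((i + 1 : ℕ) : ZMod n) = (i : ZMod n) + 1 := by push_cast; ring
  rw [hcast, ← add_assoc]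
  right
  rfl

lemma cycle_conn (hn : 6 ≤ n) (x y : ZMod n) : ∃ m, (cycleH n).IsPath x y m := by
  haveI : NeZero n := ⟨by omega⟩
  refine ⟨(y - x).val, ?_⟩
  have := cycle_path x (y - x).val
  rw [ZMod.natCast_val, ZMod.cast_id] at this
  have h2 : x + (y - x) = y := by ring
  rwa [h2] at this

lemma cycle_dist_adj (hn : 6 ≤ n) {u v : ZMod n} (hadj : (cycleH n).Adj u v) :
    (cycleH n).dist u v = 1 := by
  have h1 : (cycleH n).IsPath u v 1 := by
    obtain ⟨hne, e, he, hu, hv⟩ := hadj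
    exact ⟨fun i => if i = 0 then u else v, by simp, by simp, fun i hi => by
      have : i = 0 := by omega
      subst this
      exact ⟨e, he, by simpa using hu, by simpa using hv⟩⟩
  have h0 : ¬ (cycleH n).IsPath u v 0 := by
    rintro ⟨p, hp0, hpm, -⟩
    exact hadj.1 (hp0 ▸ hpm ▸ rfl)
  apply le_antisymm
  · exact Nat.sInf_le h1
  · rcases Nat.eq_zero_or_pos ((cycleH n).dist u v) with hd | hd
    · exfalso
      have hmem := Nat.sInf_mem (⟨1, h1⟩ : {m | (cycleH n).IsPath u v m}.Nonempty)
      have hd' : sInf {m | (cycleH n).IsPath u v m} = 0 := hd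
      rw [hd'] at hmem
      exact h0 hmem
    · exact hd

end CycleAux


section W1Aux

variable {V : Type*} [Fintype V] {H : Hypergraph' V}

lemma IsProb.le_one {μ : V → ℝ} (hμ : IsProb μ) (v : V) : μ v ≤ 1 := by
  have hsum : ∑ w, μ w = 1 := by rw [← tsum_fintype (L := .unconditional _)]; exact hμ.2.2
  calc μ v ≤ ∑ w, μ w := Finset.single_le_sum (fun i _ => hμ.1 i) (Finset.mem_univ v)
  _ = 1 := hsum

lemma prod_coupling {μ ν : V → ℝ} (hμ : IsProb μ) (hν : IsProb ν) :
    IsCoupling (fun u v => μ u * ν v) μ ν := by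
  refine ⟨fun u v => mul_nonneg (hμ.1 u) (hν.1 v), fun u => ?_, fun v => ?_⟩
  · rw [tsum_fintype, ← Finset.mul_sum, ← tsum_fintype (L := .unconditional _), hν.2.2, mul_one]
  · rw [tsum_fintype]
    have : ∑ u, μ u * ν v = (∑ u, μ u) * ν v := by rw [Finset.sum_mul]
    rw [this, ← tsum_fintype (L := .unconditional _), hμ.2.2, one_mul]

lemma W1_nonneg (μ ν : V → ℝ) : 0 ≤ W1 H μ ν := by
  apply Real.sInf_nonneg
  rintro c ⟨π, ⟨hπ0, -, -⟩, rfl⟩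
  rw [tsum_fintype]
  exact Finset.sum_nonneg fun p _ => mul_nonneg (Nat.cast_nonneg _) (hπ0 p.1 p.2)

lemma W1_bddBelow (μ ν : V → ℝ) :
    BddBelow {c | ∃ π, IsCoupling π μ ν ∧
      c = ∑' p : V × V, (H.dist p.1 p.2 : ℝ) * π p.1 p.2} := by
  refine ⟨0, ?_⟩
  rintro c ⟨π, ⟨hπ0, -, -⟩, rfl⟩
  rw [tsum_fintype]
  exact Finset.sum_nonneg fun p _ => mul_nonneg (Nat.cast_nonneg _) (hπ0 p.1 p.2)

lemma W1_le {μ ν : V → ℝ} {π : V → V → ℝ} (hπ : IsCoupling π μ ν) :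
    W1 H μ ν ≤ ∑' p : V × V, (H.dist p.1 p.2 : ℝ) * π p.1 p.2 :=
  csInf_le (W1_bddBelow μ ν) ⟨π, hπ, rfl⟩

lemma W1_dual {μ ν : V → ℝ} (hμ : IsProb μ) (hν : IsProb ν) (f : V → ℝ)
    (hf : ∀ u v, f v - f u ≤ (H.dist u v : ℝ)) :
    ∑ v, f v * (ν v - μ v) ≤ W1 H μ ν := by
  have hne : {c | ∃ π, IsCoupling π μ ν ∧
      c = ∑' p : V × V, (H.dist p.1 p.2 : ℝ) * π p.1 p.2}.Nonempty :=
    ⟨_, _, prod_coupling hμ hν, rfl⟩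
  apply le_csInf hne
  rintro c ⟨π, ⟨hπ0, hrow, hcol⟩, rfl⟩
  have hrow' : ∀ u, ∑ v, π u v = μ u := fun u => by rw [← tsum_fintype (L := .unconditional _)]; exact hrow u
  have hcol' : ∀ v, ∑ u, π u v = ν v := fun v => by rw [← tsum_fintype (L := .unconditional _)]; exact hcol v
  rw [tsum_fintype, Fintype.sum_prod_type]
  have key : ∀ u v, (f v - f u) * π u v ≤ (H.dist u v : ℝ) * π u v := fun u v =>
    mul_le_mul_of_nonneg_right (hf u v) (hπ0 u v)
  have h1 : ∑ u, ∑ v, (f v - f u) * π u v ≤ ∑ u, ∑ v, (H.dist u v : ℝ) * π u v :=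
    Finset.sum_le_sum fun u _ => Finset.sum_le_sum fun v _ => key u v
  refine le_trans (le_of_eq ?_) h1
  have e1 : ∑ u, ∑ v, (f v - f u) * π u v
      = (∑ u, ∑ v, f v * π u v) - ∑ u, ∑ v, f u * π u v := by
    rw [← Finset.sum_sub_distrib]
    congr 1; ext u
    rw [← Finset.sum_sub_distrib]
    congr 1; ext v
    ring
  have e2 : ∑ u, ∑ v, f v * π u v = ∑ v, f v * ν v := by
    rw [Finset.sum_comm]
    congr 1; ext v
    rw [← Finset.mul_sum, hcol' v, mul_comm]
  have e3 : ∑ u, ∑ v, f u * π u v = ∑ u, f u * μ u := by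
    congr 1; ext u
    rw [← Finset.mul_sum, hrow' u]
  rw [e1, e2, e3, ← Finset.sum_sub_distrib]
  congr 1; ext v
  ring

lemma pair_total {μ ν : V → ℝ} (hμ : IsProb μ) (hν : IsProb ν) {a b : V} (hab : a ≠ b)
    (heq : ∀ v, v ≠ a → v ≠ b → μ v = ν v) : μ a + μ b = ν a + ν b := by
  have hsum : ∑ v, (μ v - ν v) = 0 := by
    rw [Finset.sum_sub_distrib, ← tsum_fintype (L := .unconditional _), ← tsum_fintype (L := .unconditional _), hμ.2.2, hν.2.2, sub_self]
  have hsub : ∑ v ∈ ({a, b} : Finset V), (μ v - ν v) = ∑ v, (μ v - ν v) := by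
    apply Finset.sum_subset (Finset.subset_univ _)
    intro v _ hv
    simp only [Finset.mem_insert, Finset.mem_singleton] at hv
    push_neg at hv
    rw [heq v hv.1 hv.2, sub_self]
  rw [hsum, Finset.sum_pair hab] at hsub
  linarith

end W1Aux

section W1Cycle

variable {n : ℕ} [NeZero n]

lemma W1_pair (hn : 6 ≤ n) {μ ν : ZMod n → ℝ} (hμ : IsProb μ) (hν : IsProb ν)
    {a b : ZMod n} (hadj : (cycleH n).Adj a b) (heq : ∀ v, v ≠ a → v ≠ b → μ v = ν v)
    (hge : ν a ≤ μ a) : W1 (cycleH n) μ ν = μ a - ν a := by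
  have hab : a ≠ b := hadj.1
  have htot := pair_total hμ hν hab heq
  set δ := μ a - ν a with hδ
  have hδ0 : 0 ≤ δ := by simp only [hδ]; linarith
  set π : ZMod n → ZMod n → ℝ := fun u v =>
    if u = a ∧ v = b then δ else if u = v then (if u = a then ν a else μ u) else 0 with hπ
  have hupper : W1 (cycleH n) μ ν ≤ δ := by
    have hcoupling : IsCoupling π μ ν := by
      refine ⟨?_, ?_, ?_⟩
      · intro u v
        simp only [hπ]
        split_ifs with h1 h2 h3
        · exact hδ0
        · exact hν.1 a
        · exact hμ.1 u
        · exact le_refl 0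
      · intro u
        rw [tsum_fintype]
        by_cases hu : u = a
        · have hpt : ∀ v, π u v = (if v = b then δ else 0) + (if v = a then ν a else 0) := by
            intro v
            simp only [hπ]
            by_cases hv1 : v = b
            · have hva : ¬ v = a := fun hh => hab (hh.symm.trans hv1)
              rw [if_pos ⟨hu, hv1⟩, if_pos hv1, if_neg hva, add_zero]
            · by_cases hv2 : v = a
              · rw [if_neg (fun hh => hv1 hh.2), if_pos (hu.trans hv2.symm), if_pos hu,
                  if_neg hv1, if_pos hv2, zero_add]
              · rw [if_neg (fun hh => hv1 hh.2),
                  if_neg (fun hh : u = v => hv2 (hh.symm.trans hu)),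
                  if_neg hv1, if_neg hv2, add_zero]
          simp only [hpt]
          rw [Finset.sum_add_distrib, Finset.sum_ite_eq' Finset.univ b (fun _ => δ),
            Finset.sum_ite_eq' Finset.univ a (fun _ => ν a)]
          simp only [Finset.mem_univ, if_true, hu]
          simp only [hδ]; linarith
        · have hpt : ∀ v, π u v = if v = u then μ u else 0 := by
            intro v
            simp only [hπ]
            by_cases hv : v = u
            · rw [if_neg (fun hh => hu hh.1), if_pos hv.symm, if_neg hu, if_pos hv]
            · rw [if_neg (fun hh => hu hh.1), if_neg (fun hh : u = v => hv hh.symm), if_neg hv]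
          simp only [hpt]
          rw [Finset.sum_ite_eq' Finset.univ u (fun _ => μ u)]
          simp
      · intro v
        rw [tsum_fintype]
        by_cases hv : v = b
        · have hpt : ∀ u, π u v = (if u = a then δ else 0) + (if u = b then μ b else 0) := by
            intro u
            simp only [hπ]
            by_cases hu1 : u = a
            · have hub : ¬ u = b := fun hh => hab (hu1.symm.trans hh)
              rw [if_pos ⟨hu1, hv⟩, if_pos hu1, if_neg hub, add_zero]
            · by_cases hu2 : u = b
              · rw [if_neg (fun hh => hu1 hh.1), if_pos (hu2.trans hv.symm), if_neg hu1,
                  if_neg hu1, if_pos hu2, zero_add, hu2]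
              · rw [if_neg (fun hh => hu1 hh.1),
                  if_neg (fun hh : u = v => hu2 (hh.trans hv)),
                  if_neg hu1, if_neg hu2, add_zero]
          simp only [hpt]
          rw [Finset.sum_add_distrib, Finset.sum_ite_eq' Finset.univ a (fun _ => δ),
            Finset.sum_ite_eq' Finset.univ b (fun _ => μ b)]
          simp only [Finset.mem_univ, if_true, hv]
          simp only [hδ]; linarith
        · have hpt : ∀ u, π u v = if u = v then ν v else 0 := by
            intro u
            simp only [hπ]
            by_cases hu : u = v
            · by_cases hua : u = a
              · have hva : v = a := hu.symm.trans hua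
                rw [if_neg (fun hh => hv hh.2), if_pos hu, if_pos hu, if_pos hua, hva]
              · have hva : ¬ v = a := fun hh => hua (hu.trans hh)
                rw [if_neg (fun hh => hv hh.2), if_pos hu, if_pos hu, if_neg hua, hu,
                  heq v hva hv]
            · rw [if_neg (fun hh => hv hh.2), if_neg hu, if_neg hu]
          simp only [hpt]
          rw [Finset.sum_ite_eq' Finset.univ v (fun _ => ν v)]
          simp
    have hcost : ∑' p : ZMod n × ZMod n, ((cycleH n).dist p.1 p.2 : ℝ) * π p.1 p.2 = δ := by
      rw [tsum_fintype]
      have hpt : ∀ p : ZMod n × ZMod n, ((cycleH n).dist p.1 p.2 : ℝ) * π p.1 p.2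
          = if p = (a, b) then δ else 0 := by
        rintro ⟨u, v⟩
        by_cases hp : (u, v) = (a, b)
        · rw [if_pos hp]
          have hu : u = a := congrArg Prod.fst hp
          have hv : v = b := congrArg Prod.snd hp
          have hπval : π u v = δ := by simp only [hπ]; rw [if_pos ⟨hu, hv⟩]
          rw [hπval]
          simp only [hu, hv]
          rw [cycle_dist_adj hn hadj]
          norm_num
        · rw [if_neg hp]
          by_cases huv : u = v
          · rw [show ((u, v) : ZMod n × ZMod n).1 = u from rfl,
              show ((u, v) : ZMod n × ZMod n).2 = v from rfl, huv, Hypergraph'.dist_self]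
            norm_num
          · have hπ0' : π u v = 0 := by
              simp only [hπ]
              rw [if_neg, if_neg huv]
              intro hh
              exact hp (by rw [hh.1, hh.2])
            rw [hπ0', mul_zero]
      simp only [hpt]
      rw [Finset.sum_ite_eq' Finset.univ (a, b) (fun _ => δ)]
      simp
    calc W1 (cycleH n) μ ν ≤ _ := W1_le hcoupling
    _ = δ := hcost
  have hlower : δ ≤ W1 (cycleH n) μ ν := by
    set f : ZMod n → ℝ := fun v => if v = b then 1 else 0 with hf
    have hfedge : ∀ e ∈ (cycleH n).E, ∀ u ∈ e, ∀ v ∈ e, |f u - f v| ≤ 1 := by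
      intro e _ u _ v _
      simp only [hf]
      split_ifs <;> norm_num
    have hfdist : ∀ u v, f v - f u ≤ ((cycleH n).dist u v : ℝ) := by
      intro u v
      have := Hypergraph'.abs_le_dist f hfedge (cycle_conn hn u v)
      calc f v - f u ≤ |f v - f u| := le_abs_self _
      _ = |f u - f v| := abs_sub_comm _ _
      _ ≤ _ := this
    have hdual := W1_dual hμ hν f hfdist
    have hval : ∑ v, f v * (ν v - μ v) = δ := by
      simp only [hf, ite_mul, one_mul, zero_mul]
      rw [Finset.sum_ite_eq' Finset.univ b (fun v => ν v - μ v)]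
      simp only [Finset.mem_univ, if_true]
      simp only [hδ]; linarith
    linarith
  linarith

end W1Cycle


section ProbAux

variable {n : ℕ} [NeZero n]

lemma dirac_prob {V : Type*} [Fintype V] (x : V) : IsProb (dirac x) := by
  refine ⟨fun v => by unfold dirac; split_ifs <;> norm_num, Set.toFinite _, ?_⟩
  rw [tsum_fintype]
  unfold dirac
  rw [Finset.sum_ite_eq' Finset.univ x (fun _ => (1:ℝ))]
  simp

/-- Explicit form of the lazy random walk measure on the cycle. -/
noncomputable def mass (α : ℝ) (x : ZMod n) : ZMod n → ℝ := fun v =>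
  (if v = x then α else 0) + (if v = x + 1 then (1 - α) / 2 else 0) +
    (if v = x - 1 then (1 - α) / 2 else 0)

lemma cyc_ne' (hn : 6 ≤ n) (x : ZMod n) {j k : ℕ} (hjk : j < k) (hk : k - j ≤ 5) :
    x + (j : ZMod n) ≠ x + (k : ZMod n) := by
  intro hEq
  have hcast : (x + (j : ZMod n)) + ((k - j : ℕ) : ZMod n) = x + (k : ZMod n) := by
    rw [Nat.cast_sub hjk.le]
    ring
  exact cyc_ne hn (x + (j : ZMod n)) (by omega) hk (by rw [hcast, ← hEq])

lemma mass_ne1 (hn : 6 ≤ n) (x : ZMod n) : x + 1 ≠ x := by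
  have := cyc_ne hn x (k := 1) le_rfl (by norm_num)
  rwa [Nat.cast_one] at this

lemma mass_ne2 (hn : 6 ≤ n) (x : ZMod n) : x + 1 ≠ x - 1 := by
  intro hEq
  apply cyc_ne hn x (k := 2) (by norm_num) (by norm_num)
  push_cast
  linear_combination hEq

lemma mass_ne3 (hn : 6 ≤ n) (x : ZMod n) : x ≠ x - 1 := by
  intro hEq
  apply cyc_ne hn x (k := 1) le_rfl (by norm_num)
  push_cast
  linear_combination hEq

lemma rw_eq_mass (hn : 6 ≤ n) (α : ℝ) (x : ZMod n) :
    rw (cycleH n) α x = mass α x := by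
  funext v
  unfold rw mass
  rw [cycle_degree hn]
  by_cases h1 : v = x
  · rw [if_pos h1, if_pos h1, if_neg (by rw [h1]; exact (mass_ne1 hn x).symm),
      if_neg (by rw [h1]; exact mass_ne3 hn x)]
    ring
  · rw [if_neg h1, if_neg h1]
    by_cases h2 : v = x + 1
    · rw [if_pos (by rw [cycle_adj_iff hn]; left; exact h2), if_pos h2,
        if_neg (by rw [h2]; exact mass_ne2 hn x)]
      norm_num
    · rw [if_neg h2]
      by_cases h3 : v = x - 1
      · rw [if_pos (by rw [cycle_adj_iff hn]; right; exact h3), if_pos h3]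
        norm_num
      · rw [if_neg h3, if_neg (by rw [cycle_adj_iff hn]; push_neg; exact ⟨h2, h3⟩)]
        norm_num

lemma mass_prob (hn : 6 ≤ n) {α : ℝ} (hα0 : 0 ≤ α) (hα1 : α ≤ 1) (x : ZMod n) :
    IsProb (mass α x) := by
  have hβ : 0 ≤ (1 - α) / 2 := by linarith
  refine ⟨fun v => ?_, Set.toFinite _, ?_⟩
  · unfold mass
    apply add_nonneg (add_nonneg _ _) <;> first
      | (split_ifs <;> first | exact hα0 | exact hβ | norm_num)
  · rw [tsum_fintype]
    unfold mass
    rw [Finset.sum_add_distrib, Finset.sum_add_distrib,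
      Finset.sum_ite_eq' Finset.univ x (fun _ => α),
      Finset.sum_ite_eq' Finset.univ (x + 1) (fun _ => (1 - α)/2),
      Finset.sum_ite_eq' Finset.univ (x - 1) (fun _ => (1 - α)/2)]
    simp only [Finset.mem_univ, if_true]
    ring

end ProbAux

section StepAux

variable {n : ℕ} [NeZero n]

/-- For an edge-supported step, the `W1` distance is the absolute transported mass. -/
lemma step_W1 (hn : 6 ≤ n) {μ ν : ZMod n → ℝ} (hμ : IsProb μ) (hν : IsProb ν)
    {a : ZMod n} (hsupp : Function.support (fun v => ν v - μ v) ⊆ ({a, a + 1} : Set (ZMod n))) :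
    W1 (cycleH n) μ ν = |ν (a + 1) - μ (a + 1)| ∧ |ν (a + 1) - μ (a + 1)| ≤ 1 := by
  have hab : a ≠ a + 1 := (mass_ne1 hn a).symm
  have heq : ∀ v, v ≠ a → v ≠ a + 1 → μ v = ν v := by
    intro v hv1 hv2
    by_contra hne
    have : v ∈ Function.support (fun v => ν v - μ v) := by
      simp only [Function.mem_support]
      intro hh
      exact hne (by linarith [sub_eq_zero.mp hh])
    have := hsupp this
    simp only [Set.mem_insert_iff, Set.mem_singleton_iff] at this
    tauto
  have htot := pair_total hμ hν hab heq
  have hbound : |ν (a + 1) - μ (a + 1)| ≤ 1 := by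
    rw [abs_le]
    constructor
    · have := hν.1 (a + 1)
      have := hμ.le_one (a + 1)
      linarith
    · have := hμ.1 (a + 1)
      have := hν.le_one (a + 1)
      linarith
  refine ⟨?_, hbound⟩
  rcases le_or_gt (μ (a + 1)) (ν (a + 1)) with hge | hlt
  · -- mass moves from a to a+1
    have hga : ν a ≤ μ a := by linarith
    rw [W1_pair hn hμ hν (cycle_adj_succ hn a) heq hga]
    rw [abs_of_nonneg (by linarith)]
    linarith
  · -- mass moves from a+1 to a
    have hadj : (cycleH n).Adj (a + 1) a := by
      rw [cycle_adj_iff hn]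
      right
      ring
    have heq' : ∀ v, v ≠ a + 1 → v ≠ a → μ v = ν v := fun v h1 h2 => heq v h2 h1
    rw [W1_pair hn hμ hν hadj heq' (by linarith)]
    rw [abs_of_neg (by linarith)]
    linarith

/-- Each admissible step is supported on some edge `{a, a+1}`. -/
lemma step_edge {n : ℕ} {μ ν : ZMod n → ℝ} {I : ℕ} {ξ : ℕ → ZMod n → ℝ}
    (hadm : WhAdmissible (cycleH n) μ ν I ξ) {i : ℕ} (hi : i < I) :
    ∃ a : ZMod n,
      Function.support (fun v => ξ (i + 1) v - ξ i v) ⊆ ({a, a + 1} : Set (ZMod n)) := by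
  obtain ⟨e, ⟨a, rfl⟩, hsub⟩ := hadm.2.2.2 i hi
  exact ⟨a, hsub⟩

lemma step_W1_mem (hn : 6 ≤ n) {μ ν : ZMod n → ℝ} {I : ℕ} {ξ : ℕ → ZMod n → ℝ}
    (hadm : WhAdmissible (cycleH n) μ ν I ξ) {i : ℕ} (hi : i < I) :
    W1 (cycleH n) (ξ i) (ξ (i + 1)) ∈ Set.Icc (0:ℝ) 1 := by
  obtain ⟨a, hsupp⟩ := step_edge hadm hi
  have h1 := step_W1 hn (hadm.2.2.1 i hi.le) (hadm.2.2.1 (i+1) hi) hsupp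
  rw [h1.1]
  exact ⟨abs_nonneg _, h1.2⟩

lemma wh_cost_nonneg {h : ℝ → ℝ} {D0 D1 : ℝ} (hc : CostFn h D0 D1) (hn : 6 ≤ n)
    {μ ν : ZMod n → ℝ} {I : ℕ} {ξ : ℕ → ZMod n → ℝ}
    (hadm : WhAdmissible (cycleH n) μ ν I ξ) :
    0 ≤ ∑ i ∈ Finset.range I, h (W1 (cycleH n) (ξ i) (ξ (i + 1))) :=
  Finset.sum_nonneg fun i hi =>
    hc.nonneg _ (step_W1_mem hn hadm (Finset.mem_range.mp hi))

lemma wh_bddBelow {h : ℝ → ℝ} {D0 D1 : ℝ} (hc : CostFn h D0 D1) (hn : 6 ≤ n)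
    (μ ν : ZMod n → ℝ) :
    BddBelow {c | ∃ I ξ, WhAdmissible (cycleH n) μ ν I ξ ∧
      c = ∑ i ∈ Finset.range I, h (W1 (cycleH n) (ξ i) (ξ (i + 1)))} := by
  refine ⟨0, ?_⟩
  rintro c ⟨I, ξ, hadm, rfl⟩
  exact wh_cost_nonneg hc hn hadm

lemma wh_le {h : ℝ → ℝ} {D0 D1 : ℝ} (hc : CostFn h D0 D1) (hn : 6 ≤ n)
    {μ ν : ZMod n → ℝ} {I : ℕ} {ξ : ℕ → ZMod n → ℝ}
    (hadm : WhAdmissible (cycleH n) μ ν I ξ) :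
    Wh (cycleH n) h μ ν ≤ ∑ i ∈ Finset.range I, h (W1 (cycleH n) (ξ i) (ξ (i + 1))) :=
  csInf_le (wh_bddBelow hc hn μ ν) ⟨I, ξ, hadm, rfl⟩

end StepAux

section SymmAux

variable {V : Type*} [Fintype V] {H : Hypergraph' V}

lemma W1_symm (μ ν : V → ℝ) : W1 H μ ν = W1 H ν μ := by
  have key : ∀ μ ν : V → ℝ, ∀ c, (∃ π, IsCoupling π μ ν ∧
      c = ∑' p : V × V, (H.dist p.1 p.2 : ℝ) * π p.1 p.2) →
      (∃ π, IsCoupling π ν μ ∧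
      c = ∑' p : V × V, (H.dist p.1 p.2 : ℝ) * π p.1 p.2) := by
    rintro μ ν c ⟨π, ⟨h0, hr, hcB⟩, rfl⟩
    refine ⟨fun u v => π v u, ⟨fun u v => h0 v u, fun u => hcB u, fun v => hr v⟩, ?_⟩
    rw [tsum_fintype, tsum_fintype]
    show ∑ b : V × V, (H.dist b.1 b.2 : ℝ) * π b.1 b.2
        = ∑ b : V × V, (H.dist b.1 b.2 : ℝ) * π b.2 b.1
    rw [← Equiv.sum_comp (Equiv.prodComm V V)
      (fun b : V × V => (H.dist b.1 b.2 : ℝ) * π b.2 b.1)]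
    apply Finset.sum_congr rfl
    intro p _
    simp only [Equiv.prodComm_apply, Prod.fst_swap, Prod.snd_swap]
    rw [H.dist_symm]
  unfold W1
  congr 1
  ext c
  exact ⟨key μ ν c, key ν μ c⟩

end SymmAux

section WhSymmAux

variable {n : ℕ} [NeZero n]

lemma Wh_symm (h : ℝ → ℝ) (μ ν : ZMod n → ℝ) :
    Wh (cycleH n) h μ ν = Wh (cycleH n) h ν μ := by
  have key : ∀ μ ν : ZMod n → ℝ, ∀ c,
      (∃ I ξ, WhAdmissible (cycleH n) μ ν I ξ ∧
        c = ∑ i ∈ Finset.range I, h (W1 (cycleH n) (ξ i) (ξ (i + 1)))) →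
      (∃ I ξ, WhAdmissible (cycleH n) ν μ I ξ ∧
        c = ∑ i ∈ Finset.range I, h (W1 (cycleH n) (ξ i) (ξ (i + 1)))) := by
    rintro μ ν c ⟨I, ξ, ⟨hξ0, hξI, hprob, hstep⟩, rfl⟩
    refine ⟨I, fun i => ξ (I - i), ⟨by simpa using hξI, by simpa using hξ0,
      fun i hi => hprob (I - i) (by omega), ?_⟩, ?_⟩
    · intro i hi
      obtain ⟨e, he, hsub⟩ := hstep (I - i - 1) (by omega)
      refine ⟨e, he, ?_⟩
      intro v hv
      apply hsub
      simp only [Function.mem_support] at hv ⊢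
      intro hh
      apply hv
      have e1 : I - (i + 1) = I - i - 1 := by omega
      have e2 : I - i - 1 + 1 = I - i := by omega
      rw [e1]
      rw [e2] at hh
      linarith [hh]
    · rw [← Finset.sum_range_reflect (fun i => h (W1 (cycleH n) (ξ i) (ξ (i + 1)))) I]
      apply Finset.sum_congr rfl
      intro i hi
      rw [Finset.mem_range] at hi
      have e1 : I - (i + 1) = I - 1 - i := by omega
      have e2 : I - i = I - 1 - i + 1 := by omega
      dsimp only
      rw [e1, e2, W1_symm]
  unfold Wh
  congr 1
  ext c
  exact ⟨key μ ν c, key ν μ c⟩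

end WhSymmAux


section FluxAux

variable {n : ℕ} [NeZero n]

lemma min_abs_mem (c : ℝ) : min |c| 1 ∈ Set.Icc (0:ℝ) 1 :=
  ⟨le_min (abs_nonneg c) zero_le_one, min_le_right _ _⟩

lemma wh_flux {h : ℝ → ℝ} {D0 D1 : ℝ} (hc : CostFn h D0 D1) (hn : 6 ≤ n)
    {μ ν : ZMod n → ℝ} {I : ℕ} {ξ : ℕ → ZMod n → ℝ}
    (hadm : WhAdmissible (cycleH n) μ ν I ξ) :
    ∃ g : ZMod n → ℝ, (∀ v, ν v - μ v = g (v - 1) - g v) ∧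
      ∀ A : Finset (ZMod n), ∑ a ∈ A, h (min |g a| 1)
        ≤ ∑ i ∈ Finset.range I, h (W1 (cycleH n) (ξ i) (ξ (i + 1))) := by
  have hsteps : ∀ i : ℕ, ∃ a : ZMod n, i < I →
      Function.support (fun v => ξ (i + 1) v - ξ i v) ⊆ ({a, a + 1} : Set (ZMod n)) := by
    intro i
    by_cases hi : i < I
    · obtain ⟨a, ha⟩ := step_edge hadm hi
      exact ⟨a, fun _ => ha⟩
    · exact ⟨0, fun hh => absurd hh hi⟩
  choose ed hed using hsteps
  set δ : ℕ → ℝ := fun i => ξ (i + 1) (ed i + 1) - ξ i (ed i + 1) with hδdef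
  set g : ZMod n → ℝ :=
    fun a => ∑ i ∈ (Finset.range I).filter (fun i => ed i = a), δ i with hgdef
  have hstepfacts : ∀ i, i < I →
      (ξ (i + 1) (ed i) - ξ i (ed i) = -δ i) ∧
      (∀ v, v ≠ ed i → v ≠ ed i + 1 → ξ i v = ξ (i + 1) v) ∧
      W1 (cycleH n) (ξ i) (ξ (i + 1)) = |δ i| ∧ |δ i| ≤ 1 := by
    intro i hi
    have hsupp := hed i hi
    have hμi := hadm.2.2.1 i hi.le
    have hνi := hadm.2.2.1 (i + 1) hi
    have heq : ∀ v, v ≠ ed i → v ≠ ed i + 1 → ξ i v = ξ (i + 1) v := by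
      intro v h1 h2
      by_contra hne
      have hv : v ∈ Function.support (fun v => ξ (i + 1) v - ξ i v) := by
        simp only [Function.mem_support]
        intro hh
        exact hne (sub_eq_zero.mp hh).symm
      have := hsupp hv
      simp only [Set.mem_insert_iff, Set.mem_singleton_iff] at this
      tauto
    have htot := pair_total hμi hνi ((mass_ne1 hn (ed i)).symm) heq
    have hδi : δ i = ξ (i + 1) (ed i + 1) - ξ i (ed i + 1) := rfl
    have hw := step_W1 hn hμi hνi hsupp
    exact ⟨by linarith [htot, hδi], heq, hw.1, hw.2⟩
  have hflux : ∀ v, ν v - μ v = g (v - 1) - g v := by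
    intro v
    have htel : ν v - μ v = ∑ i ∈ Finset.range I, (ξ (i + 1) v - ξ i v) := by
      rw [Finset.sum_range_sub (fun i => ξ i v), hadm.2.1, hadm.1]
    have hpt : ∀ i ∈ Finset.range I, ξ (i + 1) v - ξ i v
        = (if ed i = v - 1 then δ i else 0) - (if ed i = v then δ i else 0) := by
      intro i hi
      rw [Finset.mem_range] at hi
      obtain ⟨hneg, heq, -, -⟩ := hstepfacts i hi
      by_cases h1 : ed i = v - 1
      · have hv : v = ed i + 1 := by rw [h1]; ring
        have h2 : ed i ≠ v := by rw [hv]; exact (mass_ne1 hn (ed i)).symm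
        rw [if_pos h1, if_neg h2, sub_zero, hv]
      · by_cases h2 : ed i = v
        · rw [if_neg h1, if_pos h2, zero_sub, ← h2]
          exact hneg
        · rw [if_neg h1, if_neg h2]
          have := heq v (fun hh => h2 hh.symm) (fun hh => h1 (by rw [hh]; ring))
          rw [this]
          ring
    rw [htel, Finset.sum_congr rfl hpt, Finset.sum_sub_distrib]
    have hg1 : g (v - 1) = ∑ i ∈ Finset.range I, (if ed i = v - 1 then δ i else 0) := by
      rw [hgdef]
      exact Finset.sum_filter _ _
    have hg2 : g v = ∑ i ∈ Finset.range I, (if ed i = v then δ i else 0) := by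
      rw [hgdef]
      exact Finset.sum_filter _ _
    rw [hg1, hg2]
  refine ⟨g, hflux, ?_⟩
  intro A
  have hperfiber : ∀ a : ZMod n, h (min |g a| 1)
      ≤ ∑ i ∈ (Finset.range I).filter (fun i => ed i = a),
          h (W1 (cycleH n) (ξ i) (ξ (i + 1))) := by
    intro a
    have hT : ∀ i ∈ (Finset.range I).filter (fun i => ed i = a),
        W1 (cycleH n) (ξ i) (ξ (i + 1)) ∈ Set.Icc (0:ℝ) 1 := fun i hi =>
      step_W1_mem hn hadm (Finset.mem_range.mp (Finset.mem_filter.mp hi).1)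
    apply hc.sum_h_ge _ _ hT (min_abs_mem _)
    calc min |g a| 1 ≤ |g a| := min_le_left _ _
    _ = |∑ i ∈ (Finset.range I).filter (fun i => ed i = a), δ i| := by rw [hgdef]
    _ ≤ ∑ i ∈ (Finset.range I).filter (fun i => ed i = a), |δ i| :=
        Finset.abs_sum_le_sum_abs _ _
    _ = ∑ i ∈ (Finset.range I).filter (fun i => ed i = a),
          W1 (cycleH n) (ξ i) (ξ (i + 1)) := by
        apply Finset.sum_congr rfl
        intro i hi
        exact ((hstepfacts i (Finset.mem_range.mp (Finset.mem_filter.mp hi).1)).2.2.1).symm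
  calc ∑ a ∈ A, h (min |g a| 1) ≤ ∑ a : ZMod n, h (min |g a| 1) :=
      Finset.sum_le_sum_of_subset_of_nonneg (Finset.subset_univ A)
        (fun a _ _ => hc.nonneg _ (min_abs_mem _))
  _ ≤ ∑ a : ZMod n, ∑ i ∈ (Finset.range I).filter (fun i => ed i = a),
        h (W1 (cycleH n) (ξ i) (ξ (i + 1))) := Finset.sum_le_sum fun a _ => hperfiber a
  _ = ∑ i ∈ Finset.range I, h (W1 (cycleH n) (ξ i) (ξ (i + 1))) :=
      Finset.sum_fiberwise_of_maps_to (fun i _ => Finset.mem_univ (ed i)) _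

end FluxAux


section WhDirac

variable {n : ℕ} [NeZero n]

lemma supp_pair {f : ZMod n → ℝ} {a b : ZMod n} (hf : ∀ v, v ≠ a → v ≠ b → f v = 0) :
    Function.support f ⊆ ({a, b} : Set (ZMod n)) := by
  intro v hv
  by_contra hmem
  simp only [Set.mem_insert_iff, Set.mem_singleton_iff] at hmem
  push_neg at hmem
  exact hv (hf v hmem.1 hmem.2)

lemma wh_dirac {h : ℝ → ℝ} {D0 D1 : ℝ} (hc : CostFn h D0 D1) (hn : 6 ≤ n) (x : ZMod n) :
    Wh (cycleH n) h (dirac x) (dirac (x + 1)) = h 1 := by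
  have hne : x + 1 ≠ x := mass_ne1 hn x
  set ξ : ℕ → ZMod n → ℝ := fun i => if i = 0 then dirac x else dirac (x + 1) with hξ
  have hξ0 : ξ 0 = dirac x := by simp [hξ]
  have hξ1 : ξ 1 = dirac (x + 1) := by simp [hξ]
  have hsupp : Function.support (fun v => ξ 1 v - ξ 0 v) ⊆ ({x, x + 1} : Set (ZMod n)) := by
    apply supp_pair
    intro v hv1 hv2
    rw [hξ0, hξ1]
    simp [dirac, hv1, hv2]
  have hadm : WhAdmissible (cycleH n) (dirac x) (dirac (x + 1)) 1 ξ := by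
    refine ⟨hξ0, hξ1, fun i hi => ?_, fun i hi => ?_⟩
    · by_cases h0 : i = 0 <;> simp [hξ, h0, dirac_prob]
    · have h0 : i = 0 := by omega
      subst h0
      exact ⟨{x, x + 1}, cycle_edge_mem, hsupp⟩
  have hW1 : W1 (cycleH n) (ξ 0) (ξ 1) = 1 := by
    have := (step_W1 hn (by rw [hξ0]; exact dirac_prob x)
      (by rw [hξ1]; exact dirac_prob (x + 1)) (a := x) hsupp).1
    rw [this, hξ0, hξ1]
    simp [dirac, hne]
  have hupper : Wh (cycleH n) h (dirac x) (dirac (x + 1)) ≤ h 1 := by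
    have := wh_le hc hn hadm
    rwa [Finset.sum_range_one, hW1] at this
  have hlower : h 1 ≤ Wh (cycleH n) h (dirac x) (dirac (x + 1)) := by
    refine le_csInf ⟨_, 1, ξ, hadm, rfl⟩ ?_
    rintro c ⟨I, ζ, hadm', rfl⟩
    obtain ⟨g, hg, hbound⟩ := wh_flux hc hn hadm'
    have hrel := hg (x + 1)
    have hval : dirac (x + 1) (x + 1) - dirac x (x + 1) = 1 := by simp [dirac, hne]
    rw [hval, show (x + 1 : ZMod n) - 1 = x from by ring] at hrel
    have hA := hbound {x, x + 1}
    rw [Finset.sum_pair (Ne.symm hne)] at hA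
    have hgx : g x = 1 + g (x + 1) := by linarith
    have hp := hc.pair_h (a := 1) ⟨zero_le_one, le_refl 1⟩ (g (x + 1))
    rw [← hgx] at hp
    have hnonneg := hc.nonneg _ (min_abs_mem (g (x + 1)))
    linarith
  linarith

end WhDirac


section WhMass

variable {n : ℕ} [NeZero n]

lemma two_point_prob {p q : ℝ} (hp : 0 ≤ p) (hq : 0 ≤ q) (hpq : p + q = 1)
    {a b : ZMod n} (hab : a ≠ b) :
    IsProb (fun v => (if v = a then p else 0) + (if v = b then q else 0)) := by
  refine ⟨fun v => add_nonneg (by split_ifs <;> simp [hp]) (by split_ifs <;> simp [hq]),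
    Set.toFinite _, ?_⟩
  rw [tsum_fintype, Finset.sum_add_distrib, Finset.sum_ite_eq' Finset.univ a (fun _ => p),
    Finset.sum_ite_eq' Finset.univ b (fun _ => q)]
  simpa using hpq

lemma wh_mass {h : ℝ → ℝ} {D0 D1 : ℝ} (hc : CostFn h D0 D1) (hn : 6 ≤ n)
    {α : ℝ} (hα0 : 0 ≤ α) (hα1 : α ≤ 1) (x : ZMod n) :
    Wh (cycleH n) h (mass α x) (mass α (x + 1)) = h α + 2 * h ((1 - α) / 2) := by
  have hβ0 : (0:ℝ) ≤ (1 - α) / 2 := by linarith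
  have hβ1 : (1 - α) / 2 ≤ 1 := by linarith
  have hne : ∀ (u v : ZMod n) (k : ℕ), 1 ≤ k → k ≤ 5 → u = v + (k : ZMod n) → u ≠ v := by
    intro u v k h1 h5 hu hEq
    apply cyc_ne hn v h1 h5
    rw [← hu, hEq]
  have d0 : x ≠ x - 1 := hne x (x-1) 1 (by norm_num) (by norm_num) (by push_cast; ring)
  have d1 : x + 1 ≠ x := hne (x+1) x 1 (by norm_num) (by norm_num) (by push_cast; ring)
  have d2 : x + 1 ≠ x - 1 := hne (x+1) (x-1) 2 (by norm_num) (by norm_num) (by push_cast; ring)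
  have d3 : x + 2 ≠ x := hne (x+2) x 2 (by norm_num) (by norm_num) (by push_cast; ring)
  have d4 : x + 2 ≠ x + 1 := hne (x+2) (x+1) 1 (by norm_num) (by norm_num) (by push_cast; ring)
  have d5 : x + 2 ≠ x - 1 := hne (x+2) (x-1) 3 (by norm_num) (by norm_num) (by push_cast; ring)
  have d6 : x + 3 ≠ x := hne (x+3) x 3 (by norm_num) (by norm_num) (by push_cast; ring)
  have d7 : x + 3 ≠ x + 1 := hne (x+3) (x+1) 2 (by norm_num) (by norm_num) (by push_cast; ring)
  have d8 : x + 3 ≠ x + 2 := hne (x+3) (x+2) 1 (by norm_num) (by norm_num) (by push_cast; ring)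
  have d9 : x + 3 ≠ x - 1 := hne (x+3) (x-1) 4 (by norm_num) (by norm_num) (by push_cast; ring)
  have d10 : x + 4 ≠ x := hne (x+4) x 4 (by norm_num) (by norm_num) (by push_cast; ring)
  have d11 : x + 4 ≠ x + 1 := hne (x+4) (x+1) 3 (by norm_num) (by norm_num) (by push_cast; ring)
  have d12 : x + 4 ≠ x + 2 := hne (x+4) (x+2) 2 (by norm_num) (by norm_num) (by push_cast; ring)
  have d13 : x + 4 ≠ x + 3 := hne (x+4) (x+3) 1 (by norm_num) (by norm_num) (by push_cast; ring)
  have d14 : x + 4 ≠ x - 1 := hne (x+4) (x-1) 5 (by norm_num) (by norm_num) (by push_cast; ring)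
  have e1 : x + 1 + 1 = x + 2 := by ring
  have e2 : x + 1 - 1 = x := by ring
  have e3 : x - 1 + 1 = x := by ring
  have hμx : mass α x x = α := by simp [mass, d0, d1, d2, d3, d4, d5, d6, d7, d8, d9, d10, d11, d12, d13, d14, Ne.symm d0, Ne.symm d1, Ne.symm d2, Ne.symm d3, Ne.symm d4, Ne.symm d5, Ne.symm d6, Ne.symm d7, Ne.symm d8, Ne.symm d9, Ne.symm d10, Ne.symm d11, Ne.symm d12, Ne.symm d13, Ne.symm d14, e1, e2, e3]
  have hμx1 : mass α x (x+1) = (1 - α)/2 := by simp [mass, d0, d1, d2, d3, d4, d5, d6, d7, d8, d9, d10, d11, d12, d13, d14, Ne.symm d0, Ne.symm d1, Ne.symm d2, Ne.symm d3, Ne.symm d4, Ne.symm d5, Ne.symm d6, Ne.symm d7, Ne.symm d8, Ne.symm d9, Ne.symm d10, Ne.symm d11, Ne.symm d12, Ne.symm d13, Ne.symm d14, e1, e2, e3]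
  have hμx2 : mass α x (x+2) = 0 := by simp [mass, d0, d1, d2, d3, d4, d5, d6, d7, d8, d9, d10, d11, d12, d13, d14, Ne.symm d0, Ne.symm d1, Ne.symm d2, Ne.symm d3, Ne.symm d4, Ne.symm d5, Ne.symm d6, Ne.symm d7, Ne.symm d8, Ne.symm d9, Ne.symm d10, Ne.symm d11, Ne.symm d12, Ne.symm d13, Ne.symm d14, e1, e2, e3]
  have hμx3 : mass α x (x+3) = 0 := by simp [mass, d0, d1, d2, d3, d4, d5, d6, d7, d8, d9, d10, d11, d12, d13, d14, Ne.symm d0, Ne.symm d1, Ne.symm d2, Ne.symm d3, Ne.symm d4, Ne.symm d5, Ne.symm d6, Ne.symm d7, Ne.symm d8, Ne.symm d9, Ne.symm d10, Ne.symm d11, Ne.symm d12, Ne.symm d13, Ne.symm d14, e1, e2, e3]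
  have hμx4 : mass α x (x+4) = 0 := by simp [mass, d0, d1, d2, d3, d4, d5, d6, d7, d8, d9, d10, d11, d12, d13, d14, Ne.symm d0, Ne.symm d1, Ne.symm d2, Ne.symm d3, Ne.symm d4, Ne.symm d5, Ne.symm d6, Ne.symm d7, Ne.symm d8, Ne.symm d9, Ne.symm d10, Ne.symm d11, Ne.symm d12, Ne.symm d13, Ne.symm d14, e1, e2, e3]
  have hνx : mass α (x+1) x = (1 - α)/2 := by simp [mass, d0, d1, d2, d3, d4, d5, d6, d7, d8, d9, d10, d11, d12, d13, d14, Ne.symm d0, Ne.symm d1, Ne.symm d2, Ne.symm d3, Ne.symm d4, Ne.symm d5, Ne.symm d6, Ne.symm d7, Ne.symm d8, Ne.symm d9, Ne.symm d10, Ne.symm d11, Ne.symm d12, Ne.symm d13, Ne.symm d14, e1, e2, e3]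
  have hνx1 : mass α (x+1) (x+1) = α := by simp [mass, d0, d1, d2, d3, d4, d5, d6, d7, d8, d9, d10, d11, d12, d13, d14, Ne.symm d0, Ne.symm d1, Ne.symm d2, Ne.symm d3, Ne.symm d4, Ne.symm d5, Ne.symm d6, Ne.symm d7, Ne.symm d8, Ne.symm d9, Ne.symm d10, Ne.symm d11, Ne.symm d12, Ne.symm d13, Ne.symm d14, e1, e2, e3]
  have hνx2 : mass α (x+1) (x+2) = (1 - α)/2 := by simp [mass, d0, d1, d2, d3, d4, d5, d6, d7, d8, d9, d10, d11, d12, d13, d14, Ne.symm d0, Ne.symm d1, Ne.symm d2, Ne.symm d3, Ne.symm d4, Ne.symm d5, Ne.symm d6, Ne.symm d7, Ne.symm d8, Ne.symm d9, Ne.symm d10, Ne.symm d11, Ne.symm d12, Ne.symm d13, Ne.symm d14, e1, e2, e3]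
  have hνx3 : mass α (x+1) (x+3) = 0 := by simp [mass, d0, d1, d2, d3, d4, d5, d6, d7, d8, d9, d10, d11, d12, d13, d14, Ne.symm d0, Ne.symm d1, Ne.symm d2, Ne.symm d3, Ne.symm d4, Ne.symm d5, Ne.symm d6, Ne.symm d7, Ne.symm d8, Ne.symm d9, Ne.symm d10, Ne.symm d11, Ne.symm d12, Ne.symm d13, Ne.symm d14, e1, e2, e3]
  have hνx4 : mass α (x+1) (x+4) = 0 := by simp [mass, d0, d1, d2, d3, d4, d5, d6, d7, d8, d9, d10, d11, d12, d13, d14, Ne.symm d0, Ne.symm d1, Ne.symm d2, Ne.symm d3, Ne.symm d4, Ne.symm d5, Ne.symm d6, Ne.symm d7, Ne.symm d8, Ne.symm d9, Ne.symm d10, Ne.symm d11, Ne.symm d12, Ne.symm d13, Ne.symm d14, e1, e2, e3]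
  set ξ1 : ZMod n → ℝ := fun v =>
    (if v = x then α + (1 - α)/2 else 0) + (if v = x + 1 then (1 - α)/2 else 0) with hξ1def
  set ξ2 : ZMod n → ℝ := fun v =>
    (if v = x then (1 - α)/2 else 0) + (if v = x + 1 then α + (1 - α)/2 else 0) with hξ2def
  set ξ : ℕ → ZMod n → ℝ := fun i =>
    if i = 0 then mass α x else if i = 1 then ξ1 else if i = 2 then ξ2 else mass α (x + 1)
    with hξdef
  have hs0 : ξ 0 = mass α x := by norm_num [hξdef]
  have hs1 : ξ 1 = ξ1 := by norm_num [hξdef]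
  have hs2 : ξ 2 = ξ2 := by norm_num [hξdef]
  have hs3 : ξ 3 = mass α (x + 1) := by norm_num [hξdef]
  have hv1x : ξ1 x = α + (1 - α)/2 := by simp only [hξ1def]; simp [Ne.symm d1]
  have hv1x1 : ξ1 (x+1) = (1 - α)/2 := by simp only [hξ1def]; simp [d1]
  have hv2x : ξ2 x = (1 - α)/2 := by simp only [hξ2def]; simp [Ne.symm d1]
  have hv2x1 : ξ2 (x+1) = α + (1 - α)/2 := by simp only [hξ2def]; simp [d1]
  have hv2x2 : ξ2 (x+2) = 0 := by simp only [hξ2def]; simp [d3, d4]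
  have hsupp0 : Function.support (fun v => ξ 1 v - ξ 0 v)
      ⊆ ({x - 1, x - 1 + 1} : Set (ZMod n)) := by
    apply supp_pair
    intro v hv1 hv2
    rw [e3] at hv2
    rw [hs0, hs1]
    by_cases hv3 : v = x + 1
    · rw [hv3, hμx1, hv1x1]
      ring
    · have hμv : mass α x v = 0 := by simp [mass, hv1, hv2, hv3]
      have hξv : ξ1 v = 0 := by simp only [hξ1def]; simp [hv2, hv3]
      rw [hμv, hξv]
      ring
  have hsupp1 : Function.support (fun v => ξ 2 v - ξ 1 v)
      ⊆ ({x, x + 1} : Set (ZMod n)) := by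
    apply supp_pair
    intro v hv1 hv2
    rw [hs1, hs2]
    simp only [hξ1def, hξ2def]
    simp [hv1, hv2]
  have hsupp2 : Function.support (fun v => ξ 3 v - ξ 2 v)
      ⊆ ({x + 1, x + 1 + 1} : Set (ZMod n)) := by
    apply supp_pair
    intro v hv1 hv2
    rw [e1] at hv2
    rw [hs2, hs3]
    by_cases hv3 : v = x
    · rw [hv3, hνx, hv2x]
      ring
    · have hνv : mass α (x+1) v = 0 := by
        unfold mass
        rw [e1, e2]
        simp [hv1, hv2, hv3]
      have hξv : ξ2 v = 0 := by simp only [hξ2def]; simp [hv1, hv3]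
      rw [hνv, hξv]
      ring
  have hprob1 : IsProb ξ1 := by
    simp only [hξ1def]
    exact two_point_prob (by linarith) hβ0 (by ring) (Ne.symm d1)
  have hprob2 : IsProb ξ2 := by
    simp only [hξ2def]
    exact two_point_prob hβ0 (by linarith) (by ring) (Ne.symm d1)
  have hadm : WhAdmissible (cycleH n) (mass α x) (mass α (x + 1)) 3 ξ := by
    refine ⟨hs0, hs3, fun i hi => ?_, fun i hi => ?_⟩
    · rcases (by omega : i = 0 ∨ i = 1 ∨ i = 2 ∨ i = 3) with rfl | rfl | rfl | rfl
      · rw [hs0]; exact mass_prob hn hα0 hα1 x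
      · rw [hs1]; exact hprob1
      · rw [hs2]; exact hprob2
      · rw [hs3]; exact mass_prob hn hα0 hα1 (x + 1)
    · rcases (by omega : i = 0 ∨ i = 1 ∨ i = 2) with rfl | rfl | rfl
      · exact ⟨{x - 1, x - 1 + 1}, cycle_edge_mem, hsupp0⟩
      · exact ⟨{x, x + 1}, cycle_edge_mem, hsupp1⟩
      · exact ⟨{x + 1, x + 1 + 1}, cycle_edge_mem, hsupp2⟩
  have hW0 : W1 (cycleH n) (ξ 0) (ξ 1) = (1 - α)/2 := by
    have hw := (step_W1 hn (by rw [hs0]; exact mass_prob hn hα0 hα1 x)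
      (by rw [hs1]; exact hprob1) (a := x - 1) hsupp0).1
    rw [hw, e3, hs0, hs1, hμx, hv1x]
    rw [abs_of_nonneg (by linarith)]
    ring
  have hW1s : W1 (cycleH n) (ξ 1) (ξ 2) = α := by
    have hw := (step_W1 hn (by rw [hs1]; exact hprob1)
      (by rw [hs2]; exact hprob2) (a := x) hsupp1).1
    rw [hw, hs1, hs2, hv1x1, hv2x1]
    rw [abs_of_nonneg (by linarith)]
    ring
  have hW2s : W1 (cycleH n) (ξ 2) (ξ 3) = (1 - α)/2 := by
    have hw := (step_W1 hn (by rw [hs2]; exact hprob2)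
      (by rw [hs3]; exact mass_prob hn hα0 hα1 (x + 1)) (a := x + 1) hsupp2).1
    rw [hw, e1, hs2, hs3, hνx2, hv2x2]
    rw [abs_of_nonneg (by linarith)]
    ring
  have hcost : ∑ i ∈ Finset.range 3, h (W1 (cycleH n) (ξ i) (ξ (i + 1)))
      = h α + 2 * h ((1 - α)/2) := by
    rw [Finset.sum_range_succ, Finset.sum_range_succ, Finset.sum_range_one]
    rw [show (1:ℕ) + 1 = 2 from rfl, show (2:ℕ) + 1 = 3 from rfl, show (0:ℕ) + 1 = 1 from rfl]
    rw [hW0, hW1s, hW2s]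
    ring
  have hupper : Wh (cycleH n) h (mass α x) (mass α (x + 1)) ≤ h α + 2 * h ((1 - α)/2) := by
    have := wh_le hc hn hadm
    rwa [hcost] at this
  have hlower : h α + 2 * h ((1 - α)/2) ≤ Wh (cycleH n) h (mass α x) (mass α (x + 1)) := by
    refine le_csInf ⟨_, 3, ξ, hadm, rfl⟩ ?_
    rintro c ⟨I, ζ, hadm', rfl⟩
    obtain ⟨g, hg, hbound⟩ := wh_flux hc hn hadm'
    have r1 := hg (x+1)
    rw [hνx1, hμx1, e2] at r1
    have r2 := hg (x+2)
    rw [hνx2, hμx2, show (x+2 : ZMod n) - 1 = x + 1 from by ring] at r2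
    have r3 := hg (x+3)
    rw [hνx3, hμx3, show (x+3 : ZMod n) - 1 = x + 2 from by ring] at r3
    have r4 := hg (x+4)
    rw [hνx4, hμx4, show (x+4 : ZMod n) - 1 = x + 3 from by ring] at r4
    have r0 := hg x
    rw [hνx, hμx] at r0
    have hgx : g x = α + g (x+2) := by linarith
    have hgx1 : g (x+1) = (1 - α)/2 + g (x+2) := by linarith
    have hgm : g (x-1) = (1 - α)/2 + g (x+2) := by linarith
    have hg3 : g (x+3) = g (x+2) := by linarith
    have hg4 : g (x+4) = g (x+2) := by linarith
    have hA := hbound {x - 1, x, x + 1, x + 2, x + 3, x + 4}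
    rw [Finset.sum_insert (by simp [Ne.symm d0, Ne.symm d2, Ne.symm d5, Ne.symm d9, Ne.symm d14]),
      Finset.sum_insert (by simp [Ne.symm d1, Ne.symm d3, Ne.symm d6, Ne.symm d10]),
      Finset.sum_insert (by simp [Ne.symm d4, Ne.symm d7, Ne.symm d11]),
      Finset.sum_insert (by simp [Ne.symm d8, Ne.symm d12]),
      Finset.sum_insert (by simp [Ne.symm d13]),
      Finset.sum_singleton] at hA
    rw [hgx, hgx1, hgm, hg3, hg4] at hA
    have p1 := hc.pair_h (a := α) ⟨hα0, hα1⟩ (g (x+2))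
    have p2 := hc.pair_h (a := (1 - α)/2) ⟨hβ0, hβ1⟩ (g (x+2))
    linarith
  linarith

end WhMass

/-- The `h`-LLY–Ricci curvature of the cycle `C_n`, `n ≥ 6`, on adjacent
vertices: it equals `(h'(1) − h'(0))/h(1)`, is nonpositive, and is negative
whenever `h` is nonlinear. -/
theorem curvature_cycle_graph (n : ℕ) (hn : 6 ≤ n)
    (h : ℝ → ℝ) (D0 D1 : ℝ) (hc : CostFn h D0 D1)
    (x y : ZMod n) (hxy : (cycleH n).Adj x y) :
    hLLY (cycleH n) h x y = (D1 - D0) / h 1 ∧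
    hLLY (cycleH n) h x y ≤ 0 ∧
    ((¬∀ t ∈ Set.Icc (0 : ℝ) 1, h t = h 1 * t) →
      hLLY (cycleH n) h x y < 0) := by
  haveI : NeZero n := ⟨by omega⟩
  have h1pos := hc.h1_pos
  have h1ne : h 1 ≠ 0 := ne_of_gt h1pos
  have hornt : y = x + 1 ∨ x = y + 1 := by
    rcases (cycle_adj_iff hn).mp hxy with h1 | h1
    · left; exact h1
    · right; rw [h1]; ring
  have hkey : (Wh (cycleH n) h (dirac x) (dirac y) = h 1) ∧
      ∀ a : ℝ, 0 ≤ a → a ≤ 1 → Wh (cycleH n) h (rw (cycleH n) a x) (rw (cycleH n) a y)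
        = h a + 2 * h ((1 - a) / 2) := by
    rcases hornt with rfl | hor
    · exact ⟨wh_dirac hc hn x, fun a ha0 ha1 => by
        rw [rw_eq_mass hn, rw_eq_mass hn]; exact wh_mass hc hn ha0 ha1 x⟩
    · refine ⟨?_, ?_⟩
      · rw [hor, Wh_symm]
        exact wh_dirac hc hn y
      · intro a ha0 ha1
        rw [hor, rw_eq_mass hn, rw_eq_mass hn, Wh_symm]
        exact wh_mass hc hn ha0 ha1 y
  obtain ⟨hd, hm⟩ := hkey
  -- the limit computation
  have hL : Filter.Tendsto (fun α => ORic (cycleH n) h α x y / (1 - α))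
      (nhdsWithin 1 (Set.Iio 1)) (nhds ((D1 - D0) / h 1)) := by
    have hmap : Filter.Tendsto (fun α : ℝ => (1 - α) / 2) (nhdsWithin 1 (Set.Iio 1))
        (nhdsWithin 0 (Set.Ioi 0)) := by
      apply tendsto_nhdsWithin_of_tendsto_nhds_of_eventually_within
      · have hcont : Filter.Tendsto (fun α : ℝ => (1 - α) / 2) (nhds 1)
            (nhds ((1 - 1) / 2)) := Continuous.tendsto (by continuity) 1
        simpa using hcont.mono_left nhdsWithin_le_nhds
      · filter_upwards [self_mem_nhdsWithin] with α hα
        simp only [Set.mem_Iio] at hα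
        simp only [Set.mem_Ioi]
        linarith
    have hD0t : Filter.Tendsto (fun α : ℝ => h ((1 - α) / 2) / ((1 - α) / 2))
        (nhdsWithin 1 (Set.Iio 1)) (nhds D0) := hc.d0.comp hmap
    have hmain : Filter.Tendsto
        (fun α : ℝ => ((h 1 - h α) / (1 - α) - h ((1 - α) / 2) / ((1 - α) / 2)) / h 1)
        (nhdsWithin 1 (Set.Iio 1)) (nhds ((D1 - D0) / h 1)) := (hc.d1.sub hD0t).div_const _
    apply Filter.Tendsto.congr' _ hmain
    filter_upwards [Ioo_mem_nhdsLT_of_mem ((by constructor <;> norm_num) :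
      (1:ℝ) ∈ Set.Ioc 0 1)] with α hα
    have hα0 : (0:ℝ) < α := hα.1
    have hα1 : α < 1 := hα.2
    have hsub1 : (1:ℝ) - α ≠ 0 := by intro hh; linarith [hh]
    show ((h 1 - h α) / (1 - α) - h ((1 - α) / 2) / ((1 - α) / 2)) / h 1
        = ORic (cycleH n) h α x y / (1 - α)
    rw [ORic, hm α hα0.le hα1.le, hd]
    field_simp
    ring
  have hliminf : hLLY (cycleH n) h x y = (D1 - D0) / h 1 := hL.liminf_eq
  have hD1D0 : D1 ≤ D0 := le_trans hc.D1_le_h1 hc.h1_le_D0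
  refine ⟨hliminf, ?_, ?_⟩
  · rw [hliminf]
    apply div_nonpos_of_nonpos_of_nonneg (by linarith) h1pos.le
  · intro hnonlin
    rw [hliminf]
    apply div_neg_of_neg_of_pos _ h1pos
    rcases lt_or_ge D1 D0 with hlt | hge
    · linarith
    · exfalso
      apply hnonlin
      have hD0h1 : D0 = h 1 := le_antisymm (by linarith [hc.D1_le_h1]) hc.h1_le_D0
      intro t ht
      rcases eq_or_lt_of_le ht.1 with h0 | hpos
      · rw [← h0, hc.zero]
        ring
      · have hle := hc.le_D0 hpos ht.2
        rw [hD0h1] at hle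
        have hgl := hc.ge_lin ht
        linarith [mul_comm t (h 1), mul_comm (h 1) t]
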